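/- Let F : ℝ^p → ℝ be differentiable and convex, and suppose its gradient ∇F is L-Lipschitz for some L > 0. Then for all u, v ∈ ℝ^p: ⟨∇F(u) − ∇F(v), u − v⟩ ≥ (1/L)·‖∇F(u) − ∇F(v)‖² (co-coercivity of the gradient). -/

import Mathlib

open scoped RealInnerProductSpace

section aux

variable {p : ℕ}

/-- The composition of `F` with a line has the expected derivative. -/
lemma line_hasDerivAt (F : EuclideanSpace ℝ (Fin p) → ℝ)
    (hdiff : Differentiable ℝ F) (x d : EuclideanSpace ℝ (Fin p)) (t : ℝ) :
    HasDerivAt (fun s : ℝ => F (x + s • d))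
      ⟪gradient F (x + t • d), d⟫ t := by
  have hγ : HasDerivAt (fun s : ℝ => x + s • d) d t := by
    simpa using ((hasDerivAt_id t).smul_const d).const_add x
  have hF := ((hdiff (x + t • d)).hasGradientAt).hasFDerivAt
  have := hF.comp_hasDerivAt t hγ
  rw [InnerProductSpace.toDual_apply_apply] at this
  exact this

/-- Descent lemma: quadratic upper bound for an `L`-smooth function. -/
lemma descent (p : ℕ) (F : EuclideanSpace ℝ (Fin p) → ℝ) (L : ℝ) (hL : 0 < L)
    (hdiff : Differentiable ℝ F)
    (hlip : ∀ u v, ‖gradient F u - gradient F v‖ ≤ L * ‖u - v‖)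
    (x y : EuclideanSpace ℝ (Fin p)) :
    F y ≤ F x + ⟪gradient F x, y - x⟫ + L / 2 * ‖y - x‖ ^ 2 := by
  set d := y - x with hd
  set ψ : ℝ → ℝ := fun t =>
    F (x + t • d) - t * ⟪gradient F x, d⟫ - L / 2 * t ^ 2 * ‖d‖ ^ 2 with hψ
  have hψderiv : ∀ t : ℝ, HasDerivAt ψ
      (⟪gradient F (x + t • d) - gradient F x, d⟫ - L * t * ‖d‖ ^ 2) t := by
    intro t
    have h1 := line_hasDerivAt F hdiff x d t
    have h2 : HasDerivAt (fun s : ℝ => s * ⟪gradient F x, d⟫)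
        (⟪gradient F x, d⟫) t := by
      simpa using (hasDerivAt_id t).mul_const (⟪gradient F x, d⟫)
    have h3 : HasDerivAt (fun s : ℝ => L / 2 * s ^ 2 * ‖d‖ ^ 2)
        (L * t * ‖d‖ ^ 2) t := by
      have h := ((hasDerivAt_pow 2 t).const_mul (L / 2)).mul_const (‖d‖ ^ 2)
      refine h.congr_deriv ?_
      push_cast
      ring
    rw [inner_sub_left]
    exact (h1.sub h2).sub h3
  have hmono : AntitoneOn ψ (Set.Icc (0 : ℝ) 1) := by
    apply antitoneOn_of_deriv_nonpos (convex_Icc 0 1)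
    · exact fun t _ => ((hψderiv t).continuousAt).continuousWithinAt
    · exact fun t _ => ((hψderiv t).differentiableAt).differentiableWithinAt
    · intro t ht
      rw [interior_Icc] at ht
      rw [(hψderiv t).deriv]
      have hCS : ⟪gradient F (x + t • d) - gradient F x, d⟫ ≤
          ‖gradient F (x + t • d) - gradient F x‖ * ‖d‖ := real_inner_le_norm _ _
      have hlip' : ‖gradient F (x + t • d) - gradient F x‖ ≤ L * (t * ‖d‖) := by
        have := hlip (x + t • d) x
        simpa [norm_smul, abs_of_pos ht.1, mul_assoc] using this
      have : ⟪gradient F (x + t • d) - gradient F x, d⟫ ≤ L * t * ‖d‖ ^ 2 := by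
        calc ⟪gradient F (x + t • d) - gradient F x, d⟫
            ≤ ‖gradient F (x + t • d) - gradient F x‖ * ‖d‖ := hCS
          _ ≤ L * (t * ‖d‖) * ‖d‖ := by
              exact mul_le_mul_of_nonneg_right hlip' (norm_nonneg _)
          _ = L * t * ‖d‖ ^ 2 := by ring
      linarith
  have h01 := hmono (Set.left_mem_Icc.2 one_pos.le) (Set.right_mem_Icc.2 one_pos.le)
    zero_le_one
  have hψ0 : ψ 0 = F x := by simp [hψ]
  have hψ1 : ψ 1 = F y - ⟪gradient F x, d⟫ - L / 2 * ‖d‖ ^ 2 := by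
    simp [hψ, hd]
  rw [hψ0, hψ1] at h01
  linarith

end aux

/-- Co-coercivity of the gradient of a differentiable convex function with
`L`-Lipschitz gradient on `ℝ^p`:
`⟪∇F(u) − ∇F(v), u − v⟫ ≥ (1/L)·‖∇F(u) − ∇F(v)‖²`. -/
theorem stmt_17 (p : ℕ) (F : EuclideanSpace ℝ (Fin p) → ℝ) (L : ℝ) (hL : 0 < L)
    (hdiff : Differentiable ℝ F)
    (hconv : ∀ u v, F v + ⟪gradient F v, u - v⟫ ≤ F u)
    (hlip : ∀ u v, ‖gradient F u - gradient F v‖ ≤ L * ‖u - v‖) :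
    ∀ u v, (1 / L) * ‖gradient F u - gradient F v‖ ^ 2 ≤
      ⟪gradient F u - gradient F v, u - v⟫ := by
  have key : ∀ u v, F v - F u + ⟪gradient F v, u - v⟫ +
      1 / (2 * L) * ‖gradient F u - gradient F v‖ ^ 2 ≤ 0 := by
    intro u v
    set gu := gradient F u
    set gv := gradient F v
    set w := u - (1 / L) • (gu - gv) with hw
    have h1 : F v + ⟪gv, w - v⟫ ≤ F w := hconv w v
    have h2 : F w ≤ F u + ⟪gu, w - u⟫ + L / 2 * ‖w - u‖ ^ 2 :=
      descent p F L hL hdiff hlip u w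
    have hwu : w - u = -((1 / L) • (gu - gv)) := by rw [hw]; abel
    have hnorm : ‖w - u‖ ^ 2 = (1 / L) ^ 2 * ‖gu - gv‖ ^ 2 := by
      rw [hwu, norm_neg, norm_smul]
      rw [Real.norm_eq_abs, abs_of_pos (by positivity : (0:ℝ) < 1 / L)]
      ring
    have hinner_u : ⟪gu, w - u⟫ = -(1 / L) * ⟪gu, gu - gv⟫ := by
      rw [hwu, inner_neg_right, real_inner_smul_right]; ring
    have hinner_v : ⟪gv, w - v⟫ = ⟪gv, u - v⟫ - (1 / L) * ⟪gv, gu - gv⟫ := by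
      have : w - v = (u - v) - (1 / L) • (gu - gv) := by rw [hw]; abel
      rw [this, inner_sub_right, real_inner_smul_right]
    have hsq : ⟪gu, gu - gv⟫ - ⟪gv, gu - gv⟫ = ‖gu - gv‖ ^ 2 := by
      rw [← inner_sub_left, real_inner_self_eq_norm_sq]
    have hLne : (L : ℝ) ≠ 0 := ne_of_gt hL
    have := h1.trans h2
    rw [hinner_u, hinner_v, hnorm] at this
    have hfin : F v + ⟪gv, u - v⟫ - (1 / L) * ⟪gv, gu - gv⟫ ≤
        F u - (1 / L) * ⟪gu, gu - gv⟫ + L / 2 * ((1 / L) ^ 2 * ‖gu - gv‖ ^ 2) := by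
      linarith
    have hLhalf : L / 2 * ((1 / L) ^ 2 * ‖gu - gv‖ ^ 2) =
        1 / (2 * L) * ‖gu - gv‖ ^ 2 := by field_simp
    rw [hLhalf] at hfin
    have : (1 / L) * (⟪gu, gu - gv⟫ - ⟪gv, gu - gv⟫) = (1 / L) * ‖gu - gv‖ ^ 2 := by
      rw [hsq]
    have hhalf : 1 / (2 * L) * ‖gu - gv‖ ^ 2 + 1 / (2 * L) * ‖gu - gv‖ ^ 2 =
        1 / L * ‖gu - gv‖ ^ 2 := by field_simp; ring
    nlinarith [this, hhalf]
  intro u v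
  have h1 := key u v
  have h2 := key v u
  have hswap : ‖gradient F v - gradient F u‖ = ‖gradient F u - gradient F v‖ :=
    norm_sub_rev _ _
  rw [hswap] at h2
  have hiv : ⟪gradient F u, v - u⟫ = -⟪gradient F u, u - v⟫ := by
    rw [← inner_neg_right]; congr 1; abel
  have hvu : ⟪gradient F v, u - v⟫ = ⟪gradient F v, u - v⟫ := rfl
  have hsum : ⟪gradient F v, u - v⟫ - ⟪gradient F u, u - v⟫ +
      1 / L * ‖gradient F u - gradient F v‖ ^ 2 ≤ 0 := by
    have hhalf : 1 / (2 * L) * ‖gradient F u - gradient F v‖ ^ 2 +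
        1 / (2 * L) * ‖gradient F u - gradient F v‖ ^ 2 =
        1 / L * ‖gradient F u - gradient F v‖ ^ 2 := by field_simp; ring
    rw [hiv] at h2; linarith
  have hdiffinner : ⟪gradient F u - gradient F v, u - v⟫ =
      ⟪gradient F u, u - v⟫ - ⟪gradient F v, u - v⟫ := inner_sub_left _ _ _
  linarith
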